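/- arXiv:2504.14077 — 4 statements merged into one kernel-verified Lean document; each statement's English description precedes it below -/
import Mathlib

section
/- Let {P_θ : θ ∈ Θ ⊆ ℝ^k} be a parametric family of probability distributions on ℝ, θ₀ ∈ Θ, and for each n let Tₙ : ℝⁿ → ℝ be a measurable test statistic with CDF Gₙ(t|θ) = P_θⁿ(Tₙ ≤ t) under i.i.d. sampling from P_θ. Suppose there is a random variable T with continuous CDF G_T such that for every sequence θₙ ∈ Θ with √n‖θₙ − θ₀‖ bounded, Tₙ converges in distribution to T under P_{θₙ}ⁿ. Then for every c ∈ ℝ, sup_{θ ∈ Aₙ(c)} sup_{t ∈ ℝ} |Gₙ(t|θ) − G_T(t)| → 0 as n → ∞, where Aₙ(c) = {θ ∈ Θ : ‖θ − θ₀‖ ≤ c/√n}. In particular, Tₙ converges in distribution under P_{θ₀}ⁿ to T, and for every c ∈ ℝ, sup_{θ ∈ Aₙ(c)} sup_{t ∈ ℝ} |Gₙ(t|θ) − Gₙ(t|θ₀)| → 0. -/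
open MeasureTheory ProbabilityTheory Filter Topology

/-- Pólya's theorem: pointwise convergence of monotone `[0,1]`-valued functions to a
continuous CDF is uniform. -/
lemma polya_uniform_aux (F : ℕ → ℝ → ℝ) (GT : ℝ → ℝ)
    (hFmono : ∀ n, Monotone (F n)) (hF0 : ∀ n t, 0 ≤ F n t) (hF1 : ∀ n t, F n t ≤ 1)
    (hGT_mono : Monotone GT) (hGT_cont : Continuous GT)
    (hGT_bot : Tendsto GT atBot (𝓝 0)) (hGT_top : Tendsto GT atTop (𝓝 1))
    (hconv : ∀ t, Tendsto (fun n => F n t) atTop (𝓝 (GT t)))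
    (ε : ℝ) (hε : 0 < ε) :
    ∃ N : ℕ, ∀ n ≥ N, ∀ t : ℝ, |F n t - GT t| < ε := by
  -- bounds on GT
  have hGT0 : ∀ t, 0 ≤ GT t := by
    intro t
    refine le_of_tendsto hGT_bot ?_
    exact eventually_atBot.2 ⟨t, fun s hs => hGT_mono hs⟩
  have hGT1 : ∀ t, GT t ≤ 1 := by
    intro t
    refine ge_of_tendsto hGT_top ?_
    exact eventually_atTop.2 ⟨t, fun s hs => hGT_mono hs⟩
  rcases lt_or_ge 1 ε with hε1 | hε1
  · exact ⟨0, fun n _ t => lt_of_le_of_lt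
      (abs_le.2 ⟨by linarith [hF0 n t, hGT1 t], by linarith [hF1 n t, hGT0 t]⟩) hε1⟩
  have hε4 : 0 < ε / 4 := by linarith
  obtain ⟨a, ha⟩ : ∃ a, GT a < ε / 4 :=
    (hGT_bot.eventually_lt_const hε4).exists
  obtain ⟨b, hb⟩ : ∃ b, 1 - ε / 4 < GT b :=
    (hGT_top.eventually_const_lt (by linarith)).exists
  have hab : a < b := by
    by_contra hcon
    push_neg at hcon
    have := hGT_mono hcon
    linarith
  -- uniform continuity on [a, b]
  have huc : UniformContinuousOn GT (Set.Icc a b) :=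
    isCompact_Icc.uniformContinuousOn_of_continuous hGT_cont.continuousOn
  rw [Metric.uniformContinuousOn_iff] at huc
  obtain ⟨δ, hδ, hδ'⟩ := huc (ε / 4) hε4
  -- grid
  set m : ℕ := ⌈(b - a) / δ⌉₊ + 1 with hm_def
  have hm0 : (0:ℝ) < m := by positivity
  set h : ℝ := (b - a) / m with hh_def
  have hh0 : 0 < h := by
    apply div_pos (by linarith) hm0
  have hhδ : h < δ := by
    rw [hh_def, div_lt_iff₀ hm0]
    have h1 : (b - a) / δ ≤ (⌈(b - a) / δ⌉₊ : ℝ) := Nat.le_ceil _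
    have h2 : ((⌈(b - a) / δ⌉₊ : ℝ)) < m := by
      rw [hm_def]; push_cast; linarith
    calc b - a = (b - a) / δ * δ := by field_simp
      _ < (m : ℝ) * δ := by
          apply mul_lt_mul_of_pos_right _ hδ
          linarith
      _ = δ * m := by ring
  set s : ℕ → ℝ := fun i => a + i * h with hs_def
  have hs0 : s 0 = a := by simp [hs_def]
  have hsm : s m = b := by
    simp only [hs_def, hh_def]
    field_simp
    ring
  have hsmono : ∀ i j : ℕ, i ≤ j → s i ≤ s j := by
    intro i j hij
    simp only [hs_def]
    have : (i:ℝ) ≤ j := by exact_mod_cast hij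
    nlinarith
  have hsIcc : ∀ i : ℕ, i ≤ m → s i ∈ Set.Icc a b := by
    intro i hi
    constructor
    · rw [← hs0]; exact hsmono 0 i (Nat.zero_le _)
    · rw [← hsm]; exact hsmono i m hi
  -- convergence at the grid points
  have key : ∀ᶠ n in atTop, ∀ i ∈ Finset.range (m + 1),
      dist (F n (s i)) (GT (s i)) < ε / 4 := by
    rw [Filter.eventually_all_finset]
    intro i _
    exact Metric.tendsto_nhds.mp (hconv (s i)) (ε / 4) hε4
  obtain ⟨N, hN⟩ := eventually_atTop.mp key
  refine ⟨N, fun n hn t => ?_⟩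
  have hgrid : ∀ i, i ≤ m → |F n (s i) - GT (s i)| < ε / 4 := by
    intro i hi
    have := hN n hn i (Finset.mem_range.2 (Nat.lt_succ_of_le hi))
    rwa [Real.dist_eq] at this
  rcases le_or_gt t a with hta | hta
  · -- t ≤ a
    have h1 : GT t ≤ GT a := hGT_mono hta
    have h2 : F n t ≤ F n a := hFmono n hta
    have h3 : |F n (s 0) - GT (s 0)| < ε / 4 := hgrid 0 (Nat.zero_le _)
    rw [hs0] at h3
    rw [abs_lt] at h3 ⊢
    have := hGT0 t
    have := hF0 n t
    constructor <;> linarith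
  rcases le_or_gt b t with htb | htb
  · -- b ≤ t
    have h1 : GT b ≤ GT t := hGT_mono htb
    have h2 : F n b ≤ F n t := hFmono n htb
    have h3 : |F n (s m) - GT (s m)| < ε / 4 := hgrid m le_rfl
    rw [hsm] at h3
    rw [abs_lt] at h3 ⊢
    constructor
    · have := hF1 n t; have := hGT1 t; linarith
    · have := hF1 n t; have := hGT1 t; linarith
  · -- a < t < b
    set i : ℕ := ⌊(t - a) / h⌋₊ with hi_def
    have hta' : 0 ≤ (t - a) / h := div_nonneg (by linarith) hh0.le
    have hi1 : (i:ℝ) ≤ (t - a) / h := Nat.floor_le hta'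
    have hi2 : (t - a) / h < i + 1 := Nat.lt_floor_add_one _
    have him : i < m := by
      rw [hi_def]
      rw [Nat.floor_lt hta']
      rw [div_lt_iff₀ hh0, hh_def]
      have : (m:ℝ) * ((b - a) / m) = b - a := by field_simp
      linarith
    have hsi_le : s i ≤ t := by
      simp only [hs_def]
      have := (le_div_iff₀ hh0).mp hi1
      linarith
    have hsi1_ge : t ≤ s (i + 1) := by
      simp only [hs_def]
      have := (div_lt_iff₀ hh0).mp hi2
      push_cast
      linarith
    have hiIcc : s i ∈ Set.Icc a b := hsIcc i him.le
    have hi1Icc : s (i + 1) ∈ Set.Icc a b := hsIcc (i + 1) him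
    have hdist : dist (s i) (s (i + 1)) < δ := by
      rw [Real.dist_eq]
      simp only [hs_def]
      push_cast
      rw [abs_lt]
      constructor <;> nlinarith
    have hosc : |GT (s i) - GT (s (i + 1))| < ε / 4 := by
      have := hδ' (s i) hiIcc (s (i + 1)) hi1Icc hdist
      rwa [Real.dist_eq] at this
    have hg1 : |F n (s i) - GT (s i)| < ε / 4 := hgrid i him.le
    have hg2 : |F n (s (i + 1)) - GT (s (i + 1))| < ε / 4 := hgrid (i + 1) him
    have hm1 : F n (s i) ≤ F n t := hFmono n hsi_le
    have hm2 : F n t ≤ F n (s (i + 1)) := hFmono n hsi1_ge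
    have hm3 : GT (s i) ≤ GT t := hGT_mono hsi_le
    have hm4 : GT t ≤ GT (s (i + 1)) := hGT_mono hsi1_ge
    rw [abs_lt] at hosc hg1 hg2 ⊢
    constructor <;> linarith

/-- Lemma on contiguous convergence: if the test statistic `Tₙ` converges in
distribution to `T` (with continuous CDF `GT`) under `P_{θₙ}ⁿ` for every sequence `θₙ` in `Θ`
with `√n‖θₙ − θ₀‖` bounded, then the sampling CDFs `Gₙ(·|θ)` converge to `GT` uniformly in `t`
and uniformly over the shrinking neighborhoods `Aₙ(c) = {θ ∈ Θ : ‖θ − θ₀‖ ≤ c/√n}`; in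
particular `Tₙ` converges in distribution to `T` under `P_{θ₀}ⁿ`, and
`sup_{θ ∈ Aₙ(c)} sup_t |Gₙ(t|θ) − Gₙ(t|θ₀)| → 0`. -/
theorem uniform_cdf_convergence_over_shrinking_neighborhoods
    {k : ℕ} (Θ : Set (EuclideanSpace ℝ (Fin k)))
    (P : EuclideanSpace ℝ (Fin k) → Measure ℝ)
    (hP : ∀ θ ∈ Θ, IsProbabilityMeasure (P θ))
    (θ₀ : EuclideanSpace ℝ (Fin k)) (hθ₀ : θ₀ ∈ Θ)
    (T : (n : ℕ) → (Fin n → ℝ) → ℝ) (hT : ∀ n, Measurable (T n))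
    -- sampling CDF of the statistic under i.i.d. sampling from `P θ`:
    (G : (n : ℕ) → EuclideanSpace ℝ (Fin k) → ℝ → ℝ)
    (hG : ∀ n θ t, G n θ t = ((Measure.pi fun _ : Fin n => P θ) {y | T n y ≤ t}).toReal)
    -- shrinking neighborhoods:
    (A : ℕ → ℝ → Set (EuclideanSpace ℝ (Fin k)))
    (hA : ∀ n c, A n c = {θ ∈ Θ | ‖θ - θ₀‖ ≤ c / Real.sqrt n})
    -- limiting continuous CDF `GT` of `T`:
    (GT : ℝ → ℝ) (hGT_mono : Monotone GT) (hGT_cont : Continuous GT)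
    (hGT_bot : Tendsto GT atBot (𝓝 0)) (hGT_top : Tendsto GT atTop (𝓝 1))
    -- convergence in distribution under every √n-bounded sequence of parameters:
    (hconv : ∀ θseq : ℕ → EuclideanSpace ℝ (Fin k), (∀ n, θseq n ∈ Θ) →
      (∃ C : ℝ, ∀ n : ℕ, Real.sqrt n * ‖θseq n - θ₀‖ ≤ C) →
      ∀ t : ℝ, Tendsto (fun n => G n (θseq n) t) atTop (𝓝 (GT t))) :
    (∀ c : ℝ, ∀ ε > (0:ℝ), ∃ N : ℕ, ∀ n ≥ N, ∀ θ ∈ A n c, ∀ t : ℝ,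
        |G n θ t - GT t| < ε) ∧
      (∀ t : ℝ, Tendsto (fun n => G n θ₀ t) atTop (𝓝 (GT t))) ∧
      (∀ c : ℝ, ∀ ε > (0:ℝ), ∃ N : ℕ, ∀ n ≥ N, ∀ θ ∈ A n c, ∀ t : ℝ,
        |G n θ t - G n θ₀ t| < ε) := by
  classical
  -- basic properties of the sampling CDFs
  have hGmono : ∀ n θ, θ ∈ Θ → Monotone (G n θ) := by
    intro n θ hθ t1 t2 h12
    haveI := hP θ hθ
    rw [hG, hG]
    exact ENNReal.toReal_mono (measure_ne_top _ _)
      (measure_mono fun y hy => le_trans hy h12)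
  have hG0 : ∀ n θ t, 0 ≤ G n θ t := by
    intro n θ t; rw [hG]; exact ENNReal.toReal_nonneg
  have hG1 : ∀ n θ, θ ∈ Θ → ∀ t, G n θ t ≤ 1 := by
    intro n θ hθ t
    haveI := hP θ hθ
    rw [hG]
    calc ((Measure.pi fun _ : Fin n => P θ) {y | T n y ≤ t}).toReal
        ≤ ((Measure.pi fun _ : Fin n => P θ) Set.univ).toReal :=
          ENNReal.toReal_mono (measure_ne_top _ _) (measure_mono (Set.subset_univ _))
      _ = 1 := by rw [measure_univ]; simp
  -- part 1
  have part1 : ∀ c : ℝ, ∀ ε > (0:ℝ), ∃ N : ℕ, ∀ n ≥ N, ∀ θ ∈ A n c, ∀ t : ℝ,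
      |G n θ t - GT t| < ε := by
    intro c ε hε
    by_contra hcon
    push_neg at hcon
    -- bad n: there exists a bad parameter/time pair at sample size n
    have hAmem : ∀ {n' : ℕ} {θ' : EuclideanSpace ℝ (Fin k)}, θ' ∈ A n' c →
        θ' ∈ Θ ∧ ‖θ' - θ₀‖ ≤ c / Real.sqrt n' := by
      intro n' θ' hm
      rw [hA] at hm
      exact hm
    set bad : ℕ → Prop := fun n => ∃ θ ∈ A n c, ∃ t : ℝ, ε ≤ |G n θ t - GT t| with hbad_def
    set θseq : ℕ → EuclideanSpace ℝ (Fin k) :=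
      fun n => if hb : bad n then hb.choose else θ₀ with hθseq_def
    have hθseqΘ : ∀ n, θseq n ∈ Θ := by
      intro n
      rw [hθseq_def]
      by_cases hb : bad n
      · simp only [dif_pos hb]
        exact (hAmem hb.choose_spec.1).1
      · simp only [dif_neg hb]; exact hθ₀
    have hθseqB : ∃ C : ℝ, ∀ n : ℕ, Real.sqrt n * ‖θseq n - θ₀‖ ≤ C := by
      refine ⟨|c|, fun n => ?_⟩
      rw [hθseq_def]
      by_cases hb : bad n
      · simp only [dif_pos hb]
        have hle : ‖hb.choose - θ₀‖ ≤ c / Real.sqrt n := (hAmem hb.choose_spec.1).2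
        rcases eq_or_ne n 0 with rfl | hn0
        · simp [Real.sqrt_zero, abs_nonneg]
        · have hpos : 0 < Real.sqrt n := Real.sqrt_pos.2 (by exact_mod_cast Nat.pos_of_ne_zero hn0)
          calc Real.sqrt n * ‖hb.choose - θ₀‖ ≤ Real.sqrt n * (c / Real.sqrt n) :=
                mul_le_mul_of_nonneg_left hle hpos.le
            _ = c := by field_simp
            _ ≤ |c| := le_abs_self c
      · simp only [dif_neg hb]
        simp [abs_nonneg]
    have hFconv := hconv θseq hθseqΘ hθseqB
    obtain ⟨N, hN⟩ := polya_uniform_aux (fun n => G n (θseq n)) GT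
      (fun n => hGmono n (θseq n) (hθseqΘ n)) (fun n t => hG0 n (θseq n) t)
      (fun n t => hG1 n (θseq n) (hθseqΘ n) t)
      hGT_mono hGT_cont hGT_bot hGT_top hFconv ε hε
    obtain ⟨n, hnN, θ, hθA, t, ht⟩ := hcon N
    have hb : bad n := ⟨θ, hθA, t, ht⟩
    obtain ⟨hbA, t', ht'⟩ := hb.choose_spec
    have : θseq n = hb.choose := by rw [hθseq_def]; simp [dif_pos hb]
    have hlt := hN n hnN t'
    rw [this] at hlt
    linarith
  refine ⟨part1, ?_, ?_⟩
  · -- part 2: convergence under θ₀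
    exact hconv (fun _ => θ₀) (fun _ => hθ₀) ⟨0, fun n => by simp⟩
  · -- part 3
    intro c ε hε
    obtain ⟨N, hN⟩ := part1 c (ε / 2) (by linarith)
    refine ⟨max N 1, fun n hn θ hθA t => ?_⟩
    have hn1 : 1 ≤ n := le_trans (le_max_right N 1) hn
    have hnN : N ≤ n := le_trans (le_max_left N 1) hn
    have hθ₀A : θ₀ ∈ A n c := by
      rw [hA]
      refine ⟨hθ₀, ?_⟩
      rw [hA] at hθA
      have := le_trans (norm_nonneg _) hθA.2
      simpa using this
    have h1 := hN n hnN θ hθA t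
    have h2 := hN n hnN θ₀ hθ₀A t
    calc |G n θ t - G n θ₀ t| = |(G n θ t - GT t) - (G n θ₀ t - GT t)| := by ring_nf
      _ ≤ |G n θ t - GT t| + |G n θ₀ t - GT t| := abs_sub _ _
      _ < ε / 2 + ε / 2 := add_lt_add h1 h2
      _ = ε := by ring
end

section
/- Let ξ and η be real-valued random variables defined on a common probability space, with cumulative distribution functions F and G respectively. Suppose ξ has a Lebesgue density bounded above by a constant M, and E|ξ − η| < ∞. Then sup_{y ∈ ℝ} |G(y) − F(y)| ≤ 2 (M · E|ξ − η|)^{1/2}. -/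
open MeasureTheory Filter

/-- Lemma 3.1 of Wang–Tokdar style:
If `ξ` has a Lebesgue density bounded by `M` and `E|ξ − η| < ∞`, then the Kolmogorov
distance between the CDFs of `η` and `ξ` is at most `2 √(M · E|ξ − η|)`. -/
theorem ks_distance_le_of_bounded_density
    {Ω : Type*} [MeasurableSpace Ω] (μ : Measure Ω) [IsProbabilityMeasure μ]
    (ξ η : Ω → ℝ) (hξ : Measurable ξ) (hη : Measurable η)
    (f : ℝ → ℝ) (M : ℝ)
    (hdens : μ.map ξ = volume.withDensity fun y => ENNReal.ofReal (f y))
    (hf_nonneg : ∀ y, 0 ≤ f y) (hf_le : ∀ y, f y ≤ M)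
    (hint : Integrable (fun ω => |ξ ω - η ω|) μ)
    (F G : ℝ → ℝ)
    (hF : ∀ y, F y = (μ {ω | ξ ω ≤ y}).toReal)
    (hG : ∀ y, G y = (μ {ω | η ω ≤ y}).toReal) :
    ⨆ y : ℝ, |G y - F y| ≤ 2 * Real.sqrt (M * ∫ ω, |ξ ω - η ω| ∂μ) := by
  set I : ℝ := ∫ ω, |ξ ω - η ω| ∂μ with hI
  have hI0 : 0 ≤ I := integral_nonneg fun ω => abs_nonneg _
  -- M > 0
  have hM0 : 0 < M := by
    by_contra h
    push_neg at h
    have hf0 : ∀ y, f y = 0 := fun y => le_antisymm ((hf_le y).trans h) (hf_nonneg y)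
    have : (μ.map ξ) Set.univ = 1 := by
      simp [Measure.map_apply hξ MeasurableSet.univ]
    rw [hdens] at this
    simp [hf0] at this
  -- step: F b ≤ F a + M * (b - a) for a ≤ b
  have hFstep : ∀ a b : ℝ, a ≤ b → F b ≤ F a + M * (b - a) := by
    intro a b hab
    have hmm : μ {ω | a < ξ ω ∧ ξ ω ≤ b} = (μ.map ξ) (Set.Ioc a b) := by
      rw [Measure.map_apply hξ measurableSet_Ioc]
      rfl
    have hbound : (μ.map ξ) (Set.Ioc a b) ≤ ENNReal.ofReal (M * (b - a)) := by
      rw [hdens, withDensity_apply _ measurableSet_Ioc]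
      calc ∫⁻ y in Set.Ioc a b, ENNReal.ofReal (f y)
          ≤ ∫⁻ _ in Set.Ioc a b, ENNReal.ofReal M := by
            exact lintegral_mono fun y => ENNReal.ofReal_le_ofReal (hf_le y)
        _ = ENNReal.ofReal M * volume (Set.Ioc a b) := setLIntegral_const _ _
        _ = ENNReal.ofReal (M * (b - a)) := by
            rw [Real.volume_Ioc, ← ENNReal.ofReal_mul hM0.le]
    have hsub : {ω | ξ ω ≤ b} ⊆ {ω | ξ ω ≤ a} ∪ {ω | a < ξ ω ∧ ξ ω ≤ b} := by
      intro ω hω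
      by_cases h : ξ ω ≤ a
      · exact Or.inl h
      · exact Or.inr ⟨lt_of_not_ge h, hω⟩
    have h1 : μ {ω | ξ ω ≤ b} ≤ μ {ω | ξ ω ≤ a} + μ {ω | a < ξ ω ∧ ξ ω ≤ b} :=
      (measure_mono hsub).trans (measure_union_le _ _)
    have hfin1 : μ {ω | ξ ω ≤ a} ≠ ⊤ := measure_ne_top μ _
    have hfin2 : μ {ω | a < ξ ω ∧ ξ ω ≤ b} ≠ ⊤ := measure_ne_top μ _
    have := ENNReal.toReal_mono (by finiteness) h1
    rw [ENNReal.toReal_add hfin1 hfin2] at this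
    rw [hF, hF]
    refine this.trans (add_le_add (le_refl _) ?_)
    rw [hmm]
    calc ((μ.map ξ) (Set.Ioc a b)).toReal
        ≤ (ENNReal.ofReal (M * (b - a))).toReal := ENNReal.toReal_mono (by finiteness) hbound
      _ = M * (b - a) := ENNReal.toReal_ofReal (by nlinarith)
  -- Markov
  have hmarkov : ∀ δ : ℝ, 0 < δ → (μ {ω | δ ≤ |ξ ω - η ω|}).toReal ≤ I / δ := by
    intro δ hδ
    have := mul_meas_ge_le_integral_of_nonneg (μ := μ)
      (ae_of_all _ fun ω => abs_nonneg (ξ ω - η ω)) hint δ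
    simp only [Measure.real] at this
    rw [le_div_iff₀ hδ]
    linarith [this]
  -- key bound
  have hkey : ∀ y : ℝ, ∀ δ : ℝ, 0 < δ → |G y - F y| ≤ M * δ + I / δ := by
    intro y δ hδ
    have htail := hmarkov δ hδ
    have hG1 : G y ≤ F (y + δ) + (μ {ω | δ ≤ |ξ ω - η ω|}).toReal := by
      rw [hG, hF]
      have hsub : {ω | η ω ≤ y} ⊆ {ω | ξ ω ≤ y + δ} ∪ {ω | δ ≤ |ξ ω - η ω|} := by
        intro ω hω
        by_cases h : δ ≤ |ξ ω - η ω|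
        · exact Or.inr h
        · push_neg at h
          left
          have := abs_lt.mp h
          simp only [Set.mem_setOf_eq] at hω ⊢
          linarith [hω, this.2]
      have h1 := (measure_mono (μ := μ) hsub).trans (measure_union_le _ _)
      have := ENNReal.toReal_mono (by finiteness) h1
      rwa [ENNReal.toReal_add (measure_ne_top μ _) (measure_ne_top μ _)] at this
    have hF1 : F (y - δ) ≤ G y + (μ {ω | δ ≤ |ξ ω - η ω|}).toReal := by
      rw [hG, hF]
      have hsub : {ω | ξ ω ≤ y - δ} ⊆ {ω | η ω ≤ y} ∪ {ω | δ ≤ |ξ ω - η ω|} := by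
        intro ω hω
        by_cases h : δ ≤ |ξ ω - η ω|
        · exact Or.inr h
        · push_neg at h
          left
          have := abs_lt.mp h
          simp only [Set.mem_setOf_eq] at hω ⊢
          linarith [hω, this.1]
      have h1 := (measure_mono (μ := μ) hsub).trans (measure_union_le _ _)
      have := ENNReal.toReal_mono (by finiteness) h1
      rwa [ENNReal.toReal_add (measure_ne_top μ _) (measure_ne_top μ _)] at this
    have hs1 : F (y + δ) ≤ F y + M * δ := by
      have := hFstep y (y + δ) (by linarith)
      simpa using this
    have hs2 : F y ≤ F (y - δ) + M * δ := by
      have := hFstep (y - δ) y (by linarith)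
      simpa using this
    rw [abs_le]
    constructor <;> linarith
  -- finish
  have hRHS0 : 0 ≤ 2 * Real.sqrt (M * I) := by positivity
  refine ciSup_le fun y => ?_
  rcases eq_or_lt_of_le hI0 with hI' | hI'
  · -- I = 0
    have : ∀ ε : ℝ, 0 < ε → |G y - F y| ≤ ε := by
      intro ε hε
      have := hkey y (ε / M) (by positivity)
      rw [← hI'] at this
      calc |G y - F y| ≤ M * (ε / M) + 0 / (ε / M) := this
        _ = ε := by field_simp; ring
    have h0 : |G y - F y| ≤ 0 := le_of_forall_pos_le_add (by intro ε hε; simpa using this ε hε)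
    exact h0.trans hRHS0
  · -- I > 0
    set δ : ℝ := Real.sqrt (M * I) / M with hδdef
    have hsq : 0 < Real.sqrt (M * I) := Real.sqrt_pos.mpr (by positivity)
    have hδpos : 0 < δ := by positivity
    have h1 := hkey y δ hδpos
    have hs2 : Real.sqrt (M * I) ^ 2 = M * I := Real.sq_sqrt (by positivity)
    have e1 : M * δ = Real.sqrt (M * I) := by
      rw [hδdef]; field_simp
    have e2 : I / δ = Real.sqrt (M * I) := by
      rw [hδdef]
      rw [div_div_eq_mul_div, eq_comm, eq_div_iff hsq.ne']
      nlinarith [hs2]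
    rw [e1, e2] at h1
    linarith
end

section
/- Let (Xₙ) be a sequence of real-valued random variables with cumulative distribution functions Gₙ, and suppose Xₙ converges in distribution to a random variable X whose cumulative distribution function G is continuous on ℝ. Then the random variables 1 − Gₙ(Xₙ) converge in distribution to the uniform distribution on [0,1]. -/
open MeasureTheory Filter Topology

/-- if `Xₙ` converges in distribution to `X` whose CDF `G` is continuous
(convergence in distribution of real random variables being pointwise convergence of CDFs at
continuity points of the continuous limit, i.e. everywhere), then `1 − Gₙ(Xₙ)` converges in
distribution to the uniform distribution on `[0,1]` (whose CDF is `t ↦ max 0 (min t 1)`). -/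
theorem one_sub_cdf_eval_tendsto_uniform
    {Ω : Type*} [MeasurableSpace Ω] (μ : Measure Ω) [IsProbabilityMeasure μ]
    (X : ℕ → Ω → ℝ) (hX : ∀ n, Measurable (X n))
    (G : ℕ → ℝ → ℝ)
    (hG : ∀ n t, G n t = (μ {ω | X n ω ≤ t}).toReal)
    (Xlim : Ω → ℝ) (hXlim : Measurable Xlim)
    (Glim : ℝ → ℝ)
    (hGlim : ∀ t, Glim t = (μ {ω | Xlim ω ≤ t}).toReal)
    (hcont : Continuous Glim)
    (hconv : ∀ t, Tendsto (fun n => G n t) atTop (𝓝 (Glim t))) :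
    ∀ t : ℝ, Tendsto (fun n => (μ {ω | 1 - G n (X n ω) ≤ t}).toReal) atTop
      (𝓝 (max 0 (min t 1))) := by
  -- basic facts about the `G n`
  have hmono : ∀ n, Monotone (G n) := by
    intro n a b hab
    rw [hG, hG]
    exact ENNReal.toReal_mono (measure_ne_top μ _)
      (measure_mono fun ω h => le_trans h hab)
  have hG0 : ∀ n x, 0 ≤ G n x := fun n x => by rw [hG]; positivity
  have hG1 : ∀ n x, G n x ≤ 1 := by
    intro n x
    rw [hG]
    calc (μ {ω | X n ω ≤ x}).toReal ≤ (μ Set.univ).toReal :=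
          ENNReal.toReal_mono (measure_ne_top μ _) (measure_mono (Set.subset_univ _))
      _ = 1 := by simp
  -- `Glim` is the CDF of the pushforward probability measure
  have hν_prob : IsProbabilityMeasure (μ.map Xlim) :=
    Measure.isProbabilityMeasure_map hXlim.aemeasurable
  have hGlim_cdf : Glim = fun t => ProbabilityTheory.cdf (μ.map Xlim) t := by
    funext t
    rw [hGlim, ProbabilityTheory.cdf_eq_real, measureReal_def, Measure.map_apply hXlim measurableSet_Iic]
    rfl
  have hTop : Tendsto Glim atTop (𝓝 1) := by
    rw [hGlim_cdf]; exact ProbabilityTheory.tendsto_cdf_atTop (μ.map Xlim)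
  have hBot : Tendsto Glim atBot (𝓝 0) := by
    rw [hGlim_cdf]; exact ProbabilityTheory.tendsto_cdf_atBot (μ.map Xlim)
  -- intermediate value theorem for `Glim`
  have hIVT : ∀ s : ℝ, 0 < s → s < 1 → ∃ x, Glim x = s := by
    intro s hs0 hs1
    exact intermediate_value_univ₂_eventually₂ (l₁ := atBot) (l₂ := atTop) hcont
      continuous_const ((hBot.eventually_lt_const hs0).mono fun x hx => hx.le)
      ((hTop.eventually_const_lt hs1).mono fun x hx => hx.le)
  -- probability of the complement of `{X n ≤ c}`
  have hcompl : ∀ n (c : ℝ), (μ {ω | X n ω ≤ c}ᶜ).toReal = 1 - G n c := by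
    intro n c
    rw [prob_compl_eq_one_sub (measurableSet_le (hX n) measurable_const), hG,
      ENNReal.toReal_sub_of_le prob_le_one ENNReal.one_ne_top]
    simp
  intro t
  by_cases ht1 : 1 ≤ t
  · -- the set is everything
    have hset : ∀ n, {ω | 1 - G n (X n ω) ≤ t} = Set.univ := fun n =>
      Set.eq_univ_of_forall fun ω => by
        have := hG0 n (X n ω); simp only [Set.mem_setOf_eq]; linarith
    have hmax : max 0 (min t 1) = 1 := by rw [min_eq_right ht1]; simp
    simp only [hset, measure_univ, ENNReal.toReal_one, hmax]
    exact tendsto_const_nhds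
  by_cases ht0 : t < 0
  · -- the set is empty
    have hset : ∀ n, {ω | 1 - G n (X n ω) ≤ t} = (∅ : Set Ω) := fun n =>
      Set.eq_empty_iff_forall_notMem.2 fun ω hω => by
        have := hG1 n (X n ω); simp only [Set.mem_setOf_eq] at hω; linarith
    have hmax : max 0 (min t 1) = 0 := by
      rw [min_eq_left (by linarith), max_eq_left (by linarith)]
    simp only [hset, measure_empty, ENNReal.toReal_zero, hmax]
    exact tendsto_const_nhds
  push_neg at ht1 ht0
  have hmax : max 0 (min t 1) = t := by
    rw [min_eq_left ht1.le, max_eq_right ht0]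
  rw [hmax]
  set F : ℕ → ℝ := fun n => (μ {ω | 1 - G n (X n ω) ≤ t}).toReal with hF
  have hF0 : ∀ n, 0 ≤ F n := fun n => ENNReal.toReal_nonneg
  rw [tendsto_order]
  constructor
  · -- lower bound
    intro a ha
    by_cases ha0 : a < 0
    · exact Eventually.of_forall fun n => lt_of_lt_of_le ha0 (hF0 n)
    push_neg at ha0
    have hta : 0 < t := lt_of_le_of_lt ha0 ha
    set s : ℝ := 1 - t with hs
    have hs1 : s < 1 := by simp [hs]; linarith
    obtain ⟨δ, hδ0, hδ1, hδ2⟩ : ∃ δ : ℝ, 0 < δ ∧ s + δ < 1 ∧ t - δ > a := by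
      refine ⟨min ((t - a) / 2) ((1 - s) / 2), ?_, ?_, ?_⟩
      · exact lt_min (by linarith) (by linarith)
      · have := min_le_right ((t - a) / 2) ((1 - s) / 2); linarith
      · have := min_le_left ((t - a) / 2) ((1 - s) / 2); linarith
    obtain ⟨c, hc⟩ := hIVT (s + δ) (by simp [hs]; linarith) hδ1
    have hGc : ∀ᶠ n in atTop, s < G n c := by
      refine (hconv c).eventually_const_lt ?_
      rw [hc]; linarith
    have hlow : ∀ᶠ n in atTop, a < 1 - G n c := by
      have : Tendsto (fun n => 1 - G n c) atTop (𝓝 (1 - Glim c)) :=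
        (tendsto_const_nhds.sub (hconv c))
      refine this.eventually_const_lt ?_
      rw [hc]; simp [hs]; linarith
    filter_upwards [hGc, hlow] with n hn1 hn2
    have hsub : {ω | X n ω ≤ c}ᶜ ⊆ {ω | 1 - G n (X n ω) ≤ t} := by
      intro ω hω
      simp only [Set.mem_compl_iff, Set.mem_setOf_eq, not_le] at hω ⊢
      have : G n c ≤ G n (X n ω) := hmono n hω.le
      simp only [hs] at hn1
      linarith
    calc a < 1 - G n c := hn2
      _ = (μ {ω | X n ω ≤ c}ᶜ).toReal := (hcompl n c).symm
      _ ≤ F n := ENNReal.toReal_mono (measure_ne_top μ _) (measure_mono hsub)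
  · -- upper bound
    intro b hb
    set s : ℝ := 1 - t with hs
    have hs0 : 0 < s := by simp [hs]; linarith
    obtain ⟨δ, hδ0, hδ1, hδ2⟩ : ∃ δ : ℝ, 0 < δ ∧ 0 < s - δ ∧ t + δ < b := by
      refine ⟨min ((b - t) / 2) (s / 2), ?_, ?_, ?_⟩
      · exact lt_min (by linarith) (by linarith)
      · have := min_le_right ((b - t) / 2) (s / 2); linarith
      · have := min_le_left ((b - t) / 2) (s / 2); linarith
    obtain ⟨c, hc⟩ := hIVT (s - δ) hδ1 (by simp [hs]; linarith)
    have hGc : ∀ᶠ n in atTop, G n c < s := by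
      refine (hconv c).eventually_lt_const ?_
      rw [hc]; linarith
    have hhigh : ∀ᶠ n in atTop, 1 - G n c < b := by
      have : Tendsto (fun n => 1 - G n c) atTop (𝓝 (1 - Glim c)) :=
        (tendsto_const_nhds.sub (hconv c))
      refine this.eventually_lt_const ?_
      rw [hc]; simp [hs]; linarith
    filter_upwards [hGc, hhigh] with n hn1 hn2
    have hsub : {ω | 1 - G n (X n ω) ≤ t} ⊆ {ω | X n ω ≤ c}ᶜ := by
      intro ω hω
      simp only [Set.mem_compl_iff, Set.mem_setOf_eq, not_le] at hω ⊢
      by_contra hle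
      push_neg at hle
      have : G n (X n ω) ≤ G n c := hmono n hle
      simp only [hs] at hn1
      linarith
    calc F n ≤ (μ {ω | X n ω ≤ c}ᶜ).toReal :=
          ENNReal.toReal_mono (measure_ne_top μ _) (measure_mono hsub)
      _ = 1 - G n c := hcompl n c
      _ < b := hn2
end

section
/- Let {p_θ : θ ∈ Θ ⊆ ℝ^k} be a family of probability densities on ℝ with respect to Lebesgue measure such that θ ↦ p_θ(u) is continuously differentiable for every u, and let s(θ)(u) = ∇_θ log p_θ(u) denote the score. Let θ₀ lie in the interior of Θ and suppose there exists ε > 0 such that ∫ sup_{θ ∈ B_ε(θ₀)} ‖s(θ)(u)‖ p_{θ₀}(u) du < ∞, where B_ε(θ₀) is the open ball of radius ε around θ₀. Then for every y ∈ ℝ, the map θ ↦ P_θ(y) = ∫_{−∞}^{y} p_θ(u) du is differentiable at θ₀ with gradient Ṗ_{θ₀}(y) = ∫_{−∞}^{y} s(θ₀)(u) p_{θ₀}(u) du; equivalently, the gradient of the CDF in the parameter equals E_{θ₀}[s(θ₀)(Y) 1(Y ≤ y)]. -/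
open MeasureTheory Filter Metric
open Topology

private lemma myDCT {h : ℕ → ℝ → ℝ} {bound : ℝ → ℝ}
    (hmeas : ∀ n, Measurable (h n)) (h0 : ∀ n u, 0 ≤ h n u)
    (hle : ∀ n u, h n u ≤ bound u)
    (hfin : ∫⁻ u, ENNReal.ofReal (bound u) < ⊤)
    (hlim : ∀ u, Tendsto (fun n => h n u) atTop (𝓝 0)) :
    Tendsto (fun n => ∫ u, h n u) atTop (𝓝 0) := by
  have key : Tendsto (fun n => ∫⁻ u, ENNReal.ofReal (h n u)) atTop (𝓝 0) := by
    have := tendsto_lintegral_of_dominated_convergence (μ := volume)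
      (F := fun n u => ENNReal.ofReal (h n u)) (f := fun _ => 0)
      (fun u => ENNReal.ofReal (bound u))
      (fun n => ENNReal.measurable_ofReal.comp (hmeas n))
      (fun n => Eventually.of_forall fun u => ENNReal.ofReal_le_ofReal (hle n u))
      hfin.ne
      (Eventually.of_forall fun u => by
        have := (ENNReal.continuous_ofReal.tendsto 0).comp (hlim u)
        simpa [Function.comp_def] using this)
    simpa using this
  have h2 : Tendsto (fun n => (∫⁻ u, ENNReal.ofReal (h n u)).toReal) atTop (𝓝 0) := by
    have := (ENNReal.tendsto_toReal (by simp : (0:ENNReal) ≠ ⊤)).comp key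
    simpa [Function.comp_def] using this
  refine h2.congr fun n => ?_
  rw [integral_eq_lintegral_of_nonneg_ae (Eventually.of_forall (h0 n))
    (hmeas n).aestronglyMeasurable]

private lemma gronwall_aux {k : ℕ} {Θ : Set (EuclideanSpace ℝ (Fin k))}
    {p : EuclideanSpace ℝ (Fin k) → ℝ → ℝ}
    {s : EuclideanSpace ℝ (Fin k) → ℝ → EuclideanSpace ℝ (Fin k)}
    {θ₀ : EuclideanSpace ℝ (Fin k)} {ε : ℝ}
    (hball : ball θ₀ ε ⊆ interior Θ)
    (hp_nonneg : ∀ θ ∈ Θ, ∀ u : ℝ, 0 ≤ p θ u)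
    (hgrad : ∀ u : ℝ, ∀ θ ∈ interior Θ, HasGradientAt (fun t => p t u) (p θ u • s θ u) θ)
    {M : ℝ} (u : ℝ) (hM0 : 0 ≤ M)
    (hM : ∀ θ ∈ ball θ₀ ε, ‖s θ u‖ ≤ M)
    {θ : EuclideanSpace ℝ (Fin k)} (hθ : θ ∈ ball θ₀ ε) :
    p θ₀ u - p θ u ≤ p θ₀ u * (M * ‖θ - θ₀‖) := by
  have hθ₀b : θ₀ ∈ ball θ₀ ε := by
    have : dist θ θ₀ < ε := mem_ball.mp hθ
    exact mem_ball_self (lt_of_le_of_lt dist_nonneg this)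
  -- the path γ t = θ + t • (θ₀ - θ)
  set γ : ℝ → EuclideanSpace ℝ (Fin k) := fun t => θ + t • (θ₀ - θ) with hγ
  have hγmem : ∀ t ∈ Set.Icc (0:ℝ) 1, γ t ∈ ball θ₀ ε := by
    intro t ht
    have : γ t - θ₀ = (1 - t) • (θ - θ₀) := by
      simp only [hγ]
      module
    rw [mem_ball, dist_eq_norm, this, norm_smul]
    have h1 : ‖θ - θ₀‖ < ε := by rwa [mem_ball, dist_eq_norm] at hθ
    have h2 : ‖(1:ℝ) - t‖ ≤ 1 := by
      rw [Real.norm_eq_abs, abs_le]; constructor <;> [linarith [ht.2]; linarith [ht.1]]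
    have h0 : (0:ℝ) ≤ ‖θ - θ₀‖ := norm_nonneg _
    nlinarith [norm_nonneg ((1:ℝ) - t)]
  have hφderiv : ∀ t ∈ Set.Icc (0:ℝ) 1,
      HasDerivAt (fun t => p (γ t) u)
        (inner ℝ (p (γ t) u • s (γ t) u) (θ₀ - θ) : ℝ) t := by
    intro t ht
    have hmem : γ t ∈ interior Θ := hball (hγmem t ht)
    have h1 : HasDerivAt γ (θ₀ - θ) t := by
      simpa [hγ] using ((hasDerivAt_id t).smul_const (θ₀ - θ)).const_add θ
    have h2 := (hgrad u (γ t) hmem).hasFDerivAt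
    have h3 := h2.comp_hasDerivAt t h1
    rw [InnerProductSpace.toDual_apply_apply] at h3
    exact h3
  have key : p (γ 1) u ≤ p (γ 0) u * Real.exp (M * ‖θ - θ₀‖) := by
    have hcont : ContinuousOn (fun t => p (γ t) u) (Set.Icc 0 1) := fun t ht =>
      ((hφderiv t ht).continuousAt).continuousWithinAt
    have hK : ∀ t ∈ Set.Ico (0:ℝ) 1,
        ‖(inner ℝ (p (γ t) u • s (γ t) u) (θ₀ - θ) : ℝ)‖
          ≤ (M * ‖θ - θ₀‖) * ‖p (γ t) u‖ + 0 := by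
      intro t ht
      have htI : t ∈ Set.Icc (0:ℝ) 1 := ⟨ht.1, ht.2.le⟩
      have hpos : 0 ≤ p (γ t) u := hp_nonneg _ (interior_subset (hball (hγmem t htI))) u
      have := norm_inner_le_norm (𝕜 := ℝ) (p (γ t) u • s (γ t) u) (θ₀ - θ)
      rw [norm_smul] at this
      have hsle : ‖s (γ t) u‖ ≤ M := hM _ (hγmem t htI)
      have h₁ : ‖θ₀ - θ‖ = ‖θ - θ₀‖ := norm_sub_rev _ _
      have h₂ : ‖p (γ t) u‖ = p (γ t) u := Real.norm_of_nonneg hpos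
      rw [Real.norm_eq_abs]
      calc |(inner ℝ (p (γ t) u • s (γ t) u) (θ₀ - θ) : ℝ)|
          ≤ ‖p (γ t) u‖ * ‖s (γ t) u‖ * ‖θ₀ - θ‖ := this
        _ ≤ (M * ‖θ - θ₀‖) * ‖p (γ t) u‖ + 0 := by
            rw [h₁, h₂]
            nlinarith [mul_le_mul_of_nonneg_left hsle (mul_nonneg hpos (norm_nonneg (θ - θ₀)))]
    have := norm_le_gronwallBound_of_norm_deriv_right_le hcont
      (fun t ht => (hφderiv t ⟨ht.1, ht.2.le⟩).hasDerivWithinAt) (le_refl ‖p (γ 0) u‖) hK 1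
      (by constructor <;> norm_num)
    rw [gronwallBound_ε0] at this
    have hpos1 : 0 ≤ p (γ 1) u :=
      hp_nonneg _ (interior_subset (hball (hγmem 1 (by norm_num)))) u
    calc p (γ 1) u = ‖p (γ 1) u‖ := (Real.norm_of_nonneg hpos1).symm
      _ ≤ ‖p (γ 0) u‖ * Real.exp (M * ‖θ - θ₀‖ * (1 - 0)) := this
      _ = p (γ 0) u * Real.exp (M * ‖θ - θ₀‖) := by
          rw [Real.norm_of_nonneg (hp_nonneg _ (interior_subset (hball (hγmem 0 (by norm_num)))) u)]
          norm_num
  have hγ0 : γ 0 = θ := by simp [hγ]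
  have hγ1 : γ 1 = θ₀ := by simp [hγ]
  rw [hγ0, hγ1] at key
  -- now: p θ₀ u ≤ p θ u * exp c with c = M * ‖θ - θ₀‖ ≥ 0
  set c := M * ‖θ - θ₀‖ with hc
  have hc0 : 0 ≤ c := mul_nonneg hM0 (norm_nonneg _)
  have hexp : 1 - c ≤ Real.exp (-c) := by linarith [Real.add_one_le_exp (-c)]
  have hexpc : 0 < Real.exp c := Real.exp_pos c
  have hexpinv : Real.exp (-c) * Real.exp c = 1 := by
    rw [← Real.exp_add]; norm_num
  have hb : p θ₀ u * Real.exp (-c) ≤ p θ u := by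
    have := mul_le_mul_of_nonneg_right key (Real.exp_pos (-c)).le
    calc p θ₀ u * Real.exp (-c) ≤ p θ u * Real.exp c * Real.exp (-c) := this
      _ = p θ u := by rw [mul_assoc, mul_comm (Real.exp c), hexpinv, mul_one]
  have hp0 : 0 ≤ p θ₀ u := hp_nonneg _ (interior_subset (hball hθ₀b)) u
  nlinarith [mul_le_mul_of_nonneg_left hexp hp0]

/-- Leibniz rule for the parametric CDF: under local uniform integrable
boundedness of the score, the gradient in `θ` at `θ₀` of the CDF `θ ↦ ∫_{-∞}^y p_θ(u) du`
is `∫_{-∞}^y s(θ₀)(u) p_{θ₀}(u) du = E_{θ₀}[s(θ₀)(Y) 1(Y ≤ y)]`.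

The score `s(θ)(u) = ∇_θ log p_θ(u)` is encoded through the relation
`∇_θ p_θ(u) = p_θ(u) • s(θ)(u)`, and "continuously differentiable" through continuity of this
gradient in `θ`. -/
theorem hasGradientAt_param_cdf
    {k : ℕ} (Θ : Set (EuclideanSpace ℝ (Fin k)))
    (p : EuclideanSpace ℝ (Fin k) → ℝ → ℝ)
    (s : EuclideanSpace ℝ (Fin k) → ℝ → EuclideanSpace ℝ (Fin k))
    (θ₀ : EuclideanSpace ℝ (Fin k)) (hθ₀ : θ₀ ∈ interior Θ)
    -- `p θ` is a probability density for each `θ ∈ Θ`: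
    (hp_nonneg : ∀ θ ∈ Θ, ∀ u : ℝ, 0 ≤ p θ u)
    (hp_meas : ∀ θ ∈ Θ, Measurable (p θ))
    (hp_one : ∀ θ ∈ Θ, ∫ u : ℝ, p θ u = 1)
    -- `θ ↦ p θ u` is continuously differentiable with gradient `p θ u • s θ u`:
    (hgrad : ∀ u : ℝ, ∀ θ ∈ interior Θ, HasGradientAt (fun t => p t u) (p θ u • s θ u) θ)
    (hgrad_cont : ∀ u : ℝ, ContinuousOn (fun θ => p θ u • s θ u) (interior Θ))
    -- local uniform integrable boundedness of the score at `θ₀`: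
    (ε : ℝ) (hε : 0 < ε) (hball : ball θ₀ ε ⊆ interior Θ)
    (hbdd : ∀ u : ℝ, BddAbove (Set.range fun θ : ball θ₀ ε => ‖s θ.1 u‖))
    (hfin : ∫⁻ u : ℝ,
        ENNReal.ofReal ((⨆ θ : ball θ₀ ε, ‖s θ.1 u‖) * p θ₀ u) < ⊤) :
    ∀ y : ℝ,
      HasGradientAt (fun θ => ∫ u in Set.Iic y, p θ u)
        (∫ u in Set.Iic y, p θ₀ u • s θ₀ u) θ₀ := by
  classical
  have hθ₀b : θ₀ ∈ ball θ₀ ε := mem_ball_self hε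
  have hθ₀Θ : θ₀ ∈ Θ := interior_subset hθ₀
  set M : ℝ → ℝ := fun u => ⨆ θ : ball θ₀ ε, ‖s θ.1 u‖ with hMdef
  set f : ℝ → EuclideanSpace ℝ (Fin k) := fun u => p θ₀ u • s θ₀ u with hfdef
  have hMle : ∀ u : ℝ, ∀ θ ∈ ball θ₀ ε, ‖s θ u‖ ≤ M u := fun u θ hθ =>
    le_ciSup (hbdd u) (⟨θ, hθ⟩ : ball θ₀ ε)
  have hM0 : ∀ u, 0 ≤ M u := fun u => (norm_nonneg _).trans (hMle u θ₀ hθ₀b)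
  have hC2 : ∀ u : ℝ, ∀ θ ∈ ball θ₀ ε, p θ₀ u - p θ u ≤ p θ₀ u * (M u * ‖θ - θ₀‖) :=
    fun u θ hθ => gronwall_aux hball hp_nonneg hgrad u (hM0 u) (fun θ' h' => hMle u θ' h') hθ
  have hfnorm : ∀ u, ‖f u‖ ≤ M u * p θ₀ u := by
    intro u
    have h0 : 0 ≤ p θ₀ u := hp_nonneg θ₀ hθ₀Θ u
    calc ‖f u‖ = p θ₀ u * ‖s θ₀ u‖ := by
          rw [hfdef]; simp only [norm_smul, Real.norm_eq_abs, abs_of_nonneg h0]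
      _ ≤ p θ₀ u * M u := mul_le_mul_of_nonneg_left (hMle u θ₀ hθ₀b) h0
      _ = M u * p θ₀ u := mul_comm _ _
  have hfin' : ∫⁻ u, ENNReal.ofReal (M u * p θ₀ u) < ⊤ := hfin
  have hMpfin : ∀ c : ℝ, 0 ≤ c → ∫⁻ u, ENNReal.ofReal (c * (M u * p θ₀ u)) < ⊤ := by
    intro c hc
    calc ∫⁻ u, ENNReal.ofReal (c * (M u * p θ₀ u))
        = ∫⁻ u, ENNReal.ofReal c * ENNReal.ofReal (M u * p θ₀ u) := by
          simp_rw [ENNReal.ofReal_mul hc]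
      _ = ENNReal.ofReal c * ∫⁻ u, ENNReal.ofReal (M u * p θ₀ u) :=
          lintegral_const_mul' _ _ ENNReal.ofReal_ne_top
      _ < ⊤ := ENNReal.mul_lt_top ENNReal.ofReal_lt_top hfin'
  -- directional difference quotients
  set τ : EuclideanSpace ℝ (Fin k) → ℕ → ℝ := fun v n => ε / ((‖v‖ + 1) * 2 * (n + 1)) with hτdef
  have hτpos : ∀ v n, 0 < τ v n := by
    intro v n
    apply div_pos hε
    positivity
  have hτball : ∀ v n, θ₀ + τ v n • v ∈ ball θ₀ ε := by
    intro v n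
    rw [mem_ball, dist_eq_norm, add_sub_cancel_left, norm_smul,
      Real.norm_of_nonneg (hτpos v n).le]
    have hden : (0:ℝ) < (‖v‖ + 1) * 2 * (n + 1) := by positivity
    rw [hτdef]
    simp only
    rw [div_mul_eq_mul_div, div_lt_iff₀ hden]
    have h1 : (0:ℝ) ≤ (n:ℝ) := Nat.cast_nonneg n
    have h2 : ‖v‖ < (‖v‖ + 1) * 2 * ((n:ℝ) + 1) := by
      nlinarith [norm_nonneg v, mul_nonneg h1 (norm_nonneg v)]
    exact mul_lt_mul_of_pos_left h2 hε
  have hτ0 : ∀ v, Tendsto (τ v) atTop (𝓝 0) := by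
    intro v
    have h1 := tendsto_one_div_add_atTop_nhds_zero_nat.const_mul (ε / ((‖v‖ + 1) * 2))
    rw [mul_zero] at h1
    refine h1.congr fun n => ?_
    rw [hτdef]
    simp only
    field_simp
  have hwΘ : ∀ v n, θ₀ + τ v n • v ∈ Θ := fun v n => interior_subset (hball (hτball v n))
  have hdir : ∀ (v : EuclideanSpace ℝ (Fin k)) (u : ℝ),
      Tendsto (fun n : ℕ => (p (θ₀ + τ v n • v) u - p θ₀ u) / τ v n) atTop
        (𝓝 (inner ℝ (f u) v : ℝ)) := by
    intro v u
    have h1 : HasDerivAt (fun t : ℝ => θ₀ + t • v) v 0 := by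
      simpa using ((hasDerivAt_id (0:ℝ)).smul_const v).const_add θ₀
    have h2 := (hgrad u θ₀ hθ₀).hasFDerivAt
    have h3 : HasDerivAt ((fun θ => p θ u) ∘ (fun t : ℝ => θ₀ + t • v))
        ((InnerProductSpace.toDual ℝ _ (f u)) v) 0 := by
      refine HasFDerivAt.comp_hasDerivAt 0 ?_ h1
      simpa only [zero_smul, add_zero] using h2
    rw [InnerProductSpace.toDual_apply_apply] at h3
    have h3' : HasDerivAt (fun t : ℝ => p (θ₀ + t • v) u) (inner ℝ (f u) v : ℝ) 0 := h3
    have hslope := hasDerivAt_iff_tendsto_slope.mp h3'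
    have hτne : Tendsto (τ v) atTop (𝓝[≠] (0:ℝ)) :=
      tendsto_nhdsWithin_of_tendsto_nhds_of_eventually_within _ (hτ0 v)
        (Eventually.of_forall fun n => (hτpos v n).ne')
    refine (hslope.comp hτne).congr fun n => ?_
    simp only [Function.comp_apply, slope_def_field]
    rw [sub_zero]
    simp [div_eq_mul_inv]
  -- measurability
  have hpm : ∀ θ ∈ ball θ₀ ε, Measurable (p θ) := fun θ h =>
    hp_meas θ (interior_subset (hball h))
  have hdmeas : ∀ v : EuclideanSpace ℝ (Fin k),
      Measurable fun u => (inner ℝ (f u) v : ℝ) := by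
    intro v
    apply measurable_of_tendsto_metrizable
      (f := fun n u => (p (θ₀ + τ v n • v) u - p θ₀ u) / τ v n)
    · intro n; exact ((hpm _ (hτball v n)).sub (hp_meas θ₀ hθ₀Θ)).div_const _
    · rw [tendsto_pi_nhds]; exact fun u => hdir v u
  have hfmeas : Measurable f := by
    suffices hofLp : Measurable fun u => WithLp.ofLp (f u) from
      Measurable.comp (WithLp.measurable_toLp 2 (Fin k → ℝ)) hofLp
    apply measurable_pi_iff.mpr
    intro i
    have h := hdmeas (EuclideanSpace.single i (1:ℝ))
    have heq : ∀ u, (inner ℝ (f u) (EuclideanSpace.single i (1:ℝ)) : ℝ) = f u i := by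
      intro u
      rw [EuclideanSpace.inner_single_right]
      simp
    simpa [heq] using h
  have hpint : ∀ θ ∈ Θ, Integrable (p θ) := fun θ h =>
    integrable_of_integral_eq_one (hp_one θ h)
  have hfint : Integrable f := by
    refine ⟨hfmeas.aestronglyMeasurable, ?_⟩
    rw [hasFiniteIntegral_iff_norm]
    calc ∫⁻ u, ENNReal.ofReal ‖f u‖ ≤ ∫⁻ u, ENNReal.ofReal (M u * p θ₀ u) :=
          lintegral_mono fun u => ENNReal.ofReal_le_ofReal (hfnorm u)
      _ < ⊤ := hfin'
  have hinnerint : ∀ v : EuclideanSpace ℝ (Fin k),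
      Integrable fun u => (inner ℝ (f u) v : ℝ) := by
    intro v
    have h := ContinuousLinearMap.integrable_comp (innerSL ℝ v) hfint
    have heq : (fun u => (inner ℝ (f u) v : ℝ)) = fun u => (innerSL ℝ v) (f u) := by
      funext u
      rw [innerSL_apply_apply]
      exact real_inner_comm _ _
    rw [heq]
    exact h
  have hinner_eq : ∀ v : EuclideanSpace ℝ (Fin k),
      ∫ u, (inner ℝ (f u) v : ℝ) = (inner ℝ (∫ u, f u) v : ℝ) := by
    intro v
    calc ∫ u, (inner ℝ (f u) v : ℝ) = ∫ u, (inner ℝ v (f u) : ℝ) := by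
          simp_rw [real_inner_comm]
      _ = (inner ℝ v (∫ u, f u) : ℝ) := integral_inner hfint v
      _ = (inner ℝ (∫ u, f u) v : ℝ) := real_inner_comm _ _
  -- the mean of the score vanishes
  have hZ : (∫ u, f u) = 0 := by
    have key : ∀ v : EuclideanSpace ℝ (Fin k), ∫ u, (inner ℝ (f u) v : ℝ) ≤ 0 := by
      intro v
      set g : ℕ → ℝ → ℝ := fun n u => (p (θ₀ + τ v n • v) u - p θ₀ u) / τ v n with hgdef
      set d : ℝ → ℝ := fun u => (inner ℝ (f u) v : ℝ) with hddef
      have hgmeas : ∀ n, Measurable (g n) := fun n =>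
        ((hpm _ (hτball v n)).sub (hp_meas θ₀ hθ₀Θ)).div_const _
      have hgint : ∀ n, Integrable (g n) := fun n =>
        ((hpint _ (hwΘ v n)).sub (hpint θ₀ hθ₀Θ)).div_const _
      have hgzero : ∀ n, ∫ u, g n u = 0 := by
        intro n
        rw [hgdef]
        simp only
        rw [integral_div, integral_sub (hpint _ (hwΘ v n)) (hpint θ₀ hθ₀Θ),
          hp_one _ (hwΘ v n), hp_one θ₀ hθ₀Θ]
        simp
      have hgneg : ∀ n u, -(g n u) ≤ ‖v‖ * (M u * p θ₀ u) := by
        intro n u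
        have h2 := hC2 u _ (hτball v n)
        have hn : ‖θ₀ + τ v n • v - θ₀‖ = τ v n * ‖v‖ := by
          rw [add_sub_cancel_left, norm_smul, Real.norm_of_nonneg (hτpos v n).le]
        have hτp := hτpos v n
        rw [hn] at h2
        have hval : -(g n u) = (p θ₀ u - p (θ₀ + τ v n • v) u) / τ v n := by
          rw [hgdef]; ring
        rw [hval, div_le_iff₀ hτp]
        nlinarith [h2]
      have hd_lim : ∀ u, Tendsto (fun n => g n u) atTop (𝓝 (d u)) := fun u => hdir v u
      have hgfin1 : ∀ n, ∫⁻ u, ENNReal.ofReal (g n u) ≠ ⊤ := by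
        intro n
        have hfi := (hasFiniteIntegral_iff_norm (g n)).mp (hgint n).2
        refine ne_of_lt (lt_of_le_of_lt ?_ hfi)
        apply lintegral_mono fun u => ?_
        rw [Real.norm_eq_abs]
        exact ENNReal.ofReal_le_ofReal (le_abs_self _)
      have hgfin2 : ∀ n, ∫⁻ u, ENNReal.ofReal (-(g n u)) ≠ ⊤ := by
        intro n
        have hfi := (hasFiniteIntegral_iff_norm (g n)).mp (hgint n).2
        refine ne_of_lt (lt_of_le_of_lt ?_ hfi)
        apply lintegral_mono fun u => ?_
        rw [Real.norm_eq_abs]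
        exact ENNReal.ofReal_le_ofReal (neg_le_abs _)
      have hposneg : ∀ n, ∫⁻ u, ENNReal.ofReal (g n u) = ∫⁻ u, ENNReal.ofReal (-(g n u)) := by
        intro n
        have h := integral_eq_lintegral_pos_part_sub_lintegral_neg_part (hgint n)
        rw [hgzero n] at h
        have h2 : (∫⁻ u, ENNReal.ofReal (g n u)).toReal
            = (∫⁻ u, ENNReal.ofReal (-(g n u))).toReal := by linarith [h.symm]
        exact (ENNReal.toReal_eq_toReal_iff' (hgfin1 n) (hgfin2 n)).mp h2
      have hdneg_fin : ∫⁻ u, ENNReal.ofReal (-(d u)) ≠ ⊤ := by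
        refine ne_of_lt (lt_of_le_of_lt ?_ (hMpfin ‖v‖ (norm_nonneg v)))
        apply lintegral_mono fun u => ?_
        apply ENNReal.ofReal_le_ofReal
        calc -(d u) ≤ |d u| := neg_le_abs _
          _ ≤ ‖f u‖ * ‖v‖ := abs_real_inner_le_norm _ _
          _ ≤ ‖v‖ * (M u * p θ₀ u) := by
              rw [mul_comm]
              exact mul_le_mul_of_nonneg_left (hfnorm u) (norm_nonneg v)
      have habs_le : ∀ u, |d u| ≤ ‖v‖ * (M u * p θ₀ u) := by
        intro u
        calc |d u| ≤ ‖f u‖ * ‖v‖ := abs_real_inner_le_norm _ _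
          _ ≤ ‖v‖ * (M u * p θ₀ u) := by
              rw [mul_comm]
              exact mul_le_mul_of_nonneg_left (hfnorm u) (norm_nonneg v)
      have hnegtend : Tendsto (fun n => ∫⁻ u, ENNReal.ofReal (-(g n u))) atTop
          (𝓝 (∫⁻ u, ENNReal.ofReal (-(d u)))) := by
        apply tendsto_lintegral_of_dominated_convergence
          (fun u => ENNReal.ofReal (‖v‖ * (M u * p θ₀ u)))
        · intro n; exact ENNReal.measurable_ofReal.comp (hgmeas n).neg
        · intro n; exact Eventually.of_forall fun u => ENNReal.ofReal_le_ofReal (hgneg n u)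
        · exact (hMpfin ‖v‖ (norm_nonneg v)).ne
        · exact Eventually.of_forall fun u =>
            (ENNReal.continuous_ofReal.tendsto _).comp ((hd_lim u).neg)
      have hFatou : ∫⁻ u, ENNReal.ofReal (d u) ≤ ∫⁻ u, ENNReal.ofReal (-(d u)) := by
        calc ∫⁻ u, ENNReal.ofReal (d u)
            ≤ liminf (fun n => ∫⁻ u, ENNReal.ofReal (g n u)) atTop := by
              refine le_trans (le_of_eq ?_)
                (lintegral_liminf_le (μ := volume)
                  (fun n => ENNReal.measurable_ofReal.comp (hgmeas n)))
              apply lintegral_congr fun u => ?_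
              exact (((ENNReal.continuous_ofReal.tendsto _).comp (hd_lim u)).liminf_eq).symm
          _ = liminf (fun n => ∫⁻ u, ENNReal.ofReal (-(g n u))) atTop := by
              apply Filter.liminf_congr
              exact Eventually.of_forall hposneg
          _ = ∫⁻ u, ENNReal.ofReal (-(d u)) := hnegtend.liminf_eq
      have hdint : Integrable d := hinnerint v
      have h := integral_eq_lintegral_pos_part_sub_lintegral_neg_part hdint
      have h2 := ENNReal.toReal_mono hdneg_fin hFatou
      show (∫ u, d u) ≤ 0
      rw [h]
      linarith
    have hG := key (∫ u, f u)
    rw [hinner_eq] at hG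
    exact real_inner_self_nonpos.mp hG
  -- main argument
  intro y
  show HasGradientAt (fun θ => ∫ u in Set.Iic y, p θ u) (∫ u in Set.Iic y, f u) θ₀
  rw [hasGradientAt_iff_hasFDerivAt, hasFDerivAt_iff_tendsto]
  set q : EuclideanSpace ℝ (Fin k) → ℝ → ℝ :=
    fun θ u => p θ u - p θ₀ u - (inner ℝ (f u) (θ - θ₀) : ℝ) with hqdef
  set A : EuclideanSpace ℝ (Fin k) → ℝ := fun θ => ‖θ - θ₀‖⁻¹ * ∫ u, |q θ u| with hAdef
  have hqint : ∀ θ ∈ Θ, Integrable (q θ) := fun θ h =>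
    ((hpint θ h).sub (hpint θ₀ hθ₀Θ)).sub (hinnerint _)
  have hqmeas : ∀ θ ∈ Θ, Measurable (q θ) := fun θ h =>
    ((hp_meas θ h).sub (hp_meas θ₀ hθ₀Θ)).sub (hdmeas _)
  have hqzero : ∀ θ ∈ Θ, ∫ u, q θ u = 0 := by
    intro θ h
    rw [hqdef]
    simp only
    have e1 : Integrable (fun u => p θ u - p θ₀ u) := (hpint θ h).sub (hpint θ₀ hθ₀Θ)
    rw [integral_sub e1 (hinnerint _),
      integral_sub (hpint θ h) (hpint θ₀ hθ₀Θ), hp_one θ h, hp_one θ₀ hθ₀Θ,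
      hinner_eq, hZ]
    simp
  have hinner_eq2 : ∀ v : EuclideanSpace ℝ (Fin k),
      (∫ u in Set.Iic y, (inner ℝ (f u) v : ℝ)) = (inner ℝ (∫ u in Set.Iic y, f u) v : ℝ) := by
    intro v
    calc (∫ u in Set.Iic y, (inner ℝ (f u) v : ℝ))
        = ∫ u in Set.Iic y, (inner ℝ v (f u) : ℝ) := by simp_rw [real_inner_comm]
      _ = (inner ℝ v (∫ u in Set.Iic y, f u) : ℝ) := integral_inner hfint.restrict v
      _ = _ := real_inner_comm _ _
  have hAtend : Tendsto A (𝓝 θ₀) (𝓝 0) := by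
    rw [tendsto_iff_seq_tendsto]
    intro x hx
    set w : ℕ → EuclideanSpace ℝ (Fin k) :=
      fun n => if x n ∈ ball θ₀ ε then x n else θ₀ with hwdef
    have hwball : ∀ n, w n ∈ ball θ₀ ε := by
      intro n
      rw [hwdef]
      by_cases h : x n ∈ ball θ₀ ε <;> simp [h, hθ₀b]
    have hwθ : ∀ n, w n ∈ Θ := fun n => interior_subset (hball (hwball n))
    have hxev : x =ᶠ[atTop] w := by
      filter_upwards [hx (ball_mem_nhds θ₀ hε)] with n hn
      rw [Set.mem_preimage] at hn
      rw [hwdef]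
      simp only [if_pos hn]
    have hwlim : Tendsto w atTop (𝓝 θ₀) := hx.congr' hxev
    suffices hAw : Tendsto (fun n => A (w n)) atTop (𝓝 0) by
      refine hAw.congr' ?_
      filter_upwards [hxev] with n hn
      rw [Function.comp_apply, hn]
    set t : ℕ → ℝ := fun n => ‖w n - θ₀‖ with htdef
    set nn : ℕ → ℝ → ℝ := fun n u => max (-(q (w n) u)) 0 with hnndef
    set hh : ℕ → ℝ → ℝ := fun n u => (t n)⁻¹ * nn n u with hhdef
    have ht0 : ∀ n, 0 ≤ t n := fun n => norm_nonneg _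
    have hnn_int : ∀ n, Integrable (nn n) := fun n => (hqint _ (hwθ n)).neg.pos_part
    have hhmeas : ∀ n, Measurable (hh n) := fun n =>
      (((hqmeas _ (hwθ n)).neg.max measurable_const)).const_mul _
    have hh0 : ∀ n u, 0 ≤ hh n u := fun n u =>
      mul_nonneg (inv_nonneg.mpr (ht0 n)) (le_max_right _ _)
    have hnnb : ∀ n u, nn n u ≤ t n * (2 * (M u * p θ₀ u)) := by
      intro n u
      have hMp0 : 0 ≤ M u * p θ₀ u := mul_nonneg (hM0 u) (hp_nonneg θ₀ hθ₀Θ u)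
      apply max_le _ (by positivity)
      have h2 := hC2 u (w n) (hwball n)
      have hfb : |(inner ℝ (f u) (w n - θ₀) : ℝ)| ≤ M u * p θ₀ u * t n := by
        calc |(inner ℝ (f u) (w n - θ₀) : ℝ)| ≤ ‖f u‖ * ‖w n - θ₀‖ := abs_real_inner_le_norm _ _
          _ ≤ (M u * p θ₀ u) * t n := mul_le_mul_of_nonneg_right (hfnorm u) (norm_nonneg _)
      have hval : -(q (w n) u)
          = (p θ₀ u - p (w n) u) + (inner ℝ (f u) (w n - θ₀) : ℝ) := by
        rw [hqdef]; ring
      rw [hval]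
      have h3 : (inner ℝ (f u) (w n - θ₀) : ℝ) ≤ M u * p θ₀ u * t n :=
        le_trans (le_abs_self _) hfb
      have h4 : p θ₀ u - p (w n) u ≤ p θ₀ u * (M u * t n) := h2
      nlinarith [hp_nonneg θ₀ hθ₀Θ u]
    have hhle : ∀ n u, hh n u ≤ 2 * (M u * p θ₀ u) := by
      intro n u
      have hMp0 : 0 ≤ M u * p θ₀ u := mul_nonneg (hM0 u) (hp_nonneg θ₀ hθ₀Θ u)
      by_cases hz : t n = 0
      · have hq0 : q (w n) u = 0 := by
          have hw0 : w n = θ₀ := by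
            have : ‖w n - θ₀‖ = 0 := hz
            rwa [norm_sub_eq_zero_iff] at this
          rw [hqdef, hw0]
          simp
        rw [hhdef]
        simp only
        rw [hnndef]
        simp only [hq0, neg_zero, max_self, mul_zero]
        positivity
      · have hzpos : 0 < t n := lt_of_le_of_ne (ht0 n) (Ne.symm hz)
        rw [hhdef]
        simp only
        rw [inv_mul_le_iff₀ hzpos]
        exact hnnb n u
    have hhlim : ∀ u, Tendsto (fun n => hh n u) atTop (𝓝 0) := by
      intro u
      have hFD := (hgrad u θ₀ hθ₀).hasFDerivAt
      rw [hasFDerivAt_iff_tendsto] at hFD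
      have hcomp := hFD.comp hwlim
      apply squeeze_zero (fun n => hh0 n u) _ hcomp
      intro n
      rw [hhdef]
      simp only [Function.comp_apply]
      apply mul_le_mul_of_nonneg_left _ (inv_nonneg.mpr (ht0 n))
      rw [InnerProductSpace.toDual_apply_apply]
      calc nn n u ≤ |q (w n) u| := max_le (neg_le_abs _) (abs_nonneg _)
        _ = ‖p (w n) u - p θ₀ u - (inner ℝ (f u) (w n - θ₀) : ℝ)‖ := by
            rw [Real.norm_eq_abs, hqdef]
    have hmain := myDCT hhmeas hh0 hhle (hMpfin 2 (by norm_num)) hhlim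
    have hAeq : ∀ n, A (w n) = 2 * ∫ u, hh n u := by
      intro n
      have habs : ∀ u, |q (w n) u| = q (w n) u + 2 * nn n u := by
        intro u
        rw [hnndef]
        simp only
        rcases le_total (q (w n) u) 0 with h | h
        · rw [abs_of_nonpos h, max_eq_left (by linarith)]; ring
        · rw [abs_of_nonneg h, max_eq_right (by linarith)]; ring
      rw [hAdef]
      simp only
      calc ‖w n - θ₀‖⁻¹ * ∫ u, |q (w n) u|
          = ‖w n - θ₀‖⁻¹ * ∫ u, (q (w n) u + 2 * nn n u) := by simp_rw [habs]
        _ = ‖w n - θ₀‖⁻¹ * ((∫ u, q (w n) u) + 2 * ∫ u, nn n u) := by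
            rw [integral_add (hqint _ (hwθ n)) ((hnn_int n).const_mul 2),
              integral_const_mul]
        _ = ‖w n - θ₀‖⁻¹ * (2 * ∫ u, nn n u) := by rw [hqzero _ (hwθ n)]; ring_nf
        _ = 2 * ∫ u, hh n u := by
            rw [hhdef]
            simp only
            rw [integral_const_mul]
            rw [htdef]
            ring
    have h2 := hmain.const_mul (2:ℝ)
    rw [mul_zero] at h2
    exact h2.congr fun n => (hAeq n).symm
  refine squeeze_zero' ?_ ?_ hAtend
  · filter_upwards with θ
    positivity
  · filter_upwards [ball_mem_nhds θ₀ hε] with θ hθ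
    have hΘ' : θ ∈ Θ := interior_subset (hball hθ)
    have h1 : (InnerProductSpace.toDual ℝ (EuclideanSpace ℝ (Fin k)) (∫ u in Set.Iic y, f u))
        (θ - θ₀) = ∫ u in Set.Iic y, (inner ℝ (f u) (θ - θ₀) : ℝ) := by
      rw [InnerProductSpace.toDual_apply_apply, hinner_eq2]
    have h2 : (∫ u in Set.Iic y, p θ u) - (∫ u in Set.Iic y, p θ₀ u)
        - (∫ u in Set.Iic y, (inner ℝ (f u) (θ - θ₀) : ℝ)) = ∫ u in Set.Iic y, q θ u := by
      have e1 : Integrable (fun u => p θ u - p θ₀ u)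
          ((volume : Measure ℝ).restrict (Set.Iic y)) :=
        ((hpint θ hΘ').restrict).sub ((hpint θ₀ hθ₀Θ).restrict)
      rw [← integral_sub ((hpint θ hΘ').restrict) ((hpint θ₀ hθ₀Θ).restrict),
        ← integral_sub e1 ((hinnerint _).restrict)]
    have h3 : ‖∫ u in Set.Iic y, q θ u‖ ≤ ∫ u, |q θ u| := by
      calc ‖∫ u in Set.Iic y, q θ u‖ ≤ ∫ u in Set.Iic y, ‖q θ u‖ :=
            norm_integral_le_integral_norm _
        _ ≤ ∫ u, ‖q θ u‖ := integral_mono_measure Measure.restrict_le_self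
            (Eventually.of_forall fun u => norm_nonneg _) (hqint θ hΘ').norm
        _ = ∫ u, |q θ u| := by simp [Real.norm_eq_abs]
    calc ‖θ - θ₀‖⁻¹ * ‖(∫ u in Set.Iic y, p θ u) - (∫ u in Set.Iic y, p θ₀ u)
          - (InnerProductSpace.toDual ℝ (EuclideanSpace ℝ (Fin k)) (∫ u in Set.Iic y, f u))
            (θ - θ₀)‖
        = ‖θ - θ₀‖⁻¹ * ‖∫ u in Set.Iic y, q θ u‖ := by rw [h1, h2]
      _ ≤ A θ := by
          rw [hAdef]
          exact mul_le_mul_of_nonneg_left h3 (inv_nonneg.mpr (norm_nonneg _))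
end
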